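/- arXiv:1402.0686 — 4 statements merged into one kernel-verified Lean document; each statement's English description precedes it below -/
import Mathlib

section
/- For an integrable real random variable Y and θ ∈ (0,1), the equation θ·E[(Y−y)⁺] = (1−θ)·E[(Y−y)⁻] has a unique solution y ∈ ℝ, provided Y is non-degenerate (not almost surely constant); this solution is called the θ-expectile of Y. -/
open MeasureTheory

/-- `y` is a `θ`-expectile of the real random variable `Y`:
`θ·E[(Y−y)⁺] = (1−θ)·E[(Y−y)⁻]`. -/
def IsExpectile {Ω : Type*} [MeasureSpace Ω] (θ : ℝ) (Y : Ω → ℝ) (y : ℝ) : Prop :=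
  θ * ∫ ω, max (Y ω - y) 0 = (1 - θ) * ∫ ω, max (y - Y ω) 0

/-- For an integrable, non-degenerate real random variable `Y` and `θ ∈ (0,1)`, the
expectile equation has a unique solution. -/
theorem expectile_exists_unique {Ω : Type*} [MeasureSpace Ω]
    [IsProbabilityMeasure (volume : Measure Ω)]
    (Y : Ω → ℝ) (hY : Integrable Y) (hnd : ¬ ∃ c : ℝ, ∀ᵐ ω, Y ω = c)
    (θ : ℝ) (hθ : θ ∈ Set.Ioo (0 : ℝ) 1) :
    ∃! y : ℝ, IsExpectile θ Y y := by
  obtain ⟨hθ0, hθ1⟩ := hθ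
  set A : ℝ → ℝ := fun y => ∫ ω, max (Y ω - y) 0 with hA
  set B : ℝ → ℝ := fun y => ∫ ω, max (y - Y ω) 0 with hB
  set f : ℝ → ℝ := fun y => θ * A y - (1 - θ) * B y with hf
  have hInt : ∀ y : ℝ, Integrable (fun ω => max (Y ω - y) 0) :=
    fun y => (hY.sub (integrable_const y)).pos_part
  have hInt' : ∀ y : ℝ, Integrable (fun ω => max (y - Y ω) 0) :=
    fun y => ((integrable_const y).sub hY).pos_part
  have hAB : ∀ y : ℝ, A y - B y = (∫ ω, Y ω) - y := by
    intro y
    rw [hA, hB]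
    simp only
    rw [← integral_sub (hInt y) (hInt' y)]
    have heq : (fun ω => max (Y ω - y) 0 - max (y - Y ω) 0) = fun ω => Y ω - y := by
      funext ω
      have : y - Y ω = -(Y ω - y) := by ring
      rw [this, max_zero_sub_max_neg_zero_eq_self]
    rw [heq, integral_sub hY (integrable_const y), integral_const]
    simp
  have hkey : ∀ y₁ y₂ : ℝ, (A y₁ - A y₂) + (B y₂ - B y₁) = y₂ - y₁ := by
    intro y₁ y₂
    have h1 := hAB y₁
    have h2 := hAB y₂
    linarith
  have hAanti : ∀ y₁ y₂ : ℝ, y₁ ≤ y₂ → A y₂ ≤ A y₁ := by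
    intro y₁ y₂ h
    exact integral_mono (hInt y₂) (hInt y₁)
      (fun ω => max_le_max (by linarith) le_rfl)
  have hBmono : ∀ y₁ y₂ : ℝ, y₁ ≤ y₂ → B y₁ ≤ B y₂ := by
    intro y₁ y₂ h
    exact integral_mono (hInt' y₁) (hInt' y₂)
      (fun ω => max_le_max (by linarith) le_rfl)
  set m : ℝ := min θ (1 - θ) with hm
  have hm0 : 0 < m := lt_min hθ0 (by linarith)
  have hstep : ∀ y₁ y₂ : ℝ, y₁ ≤ y₂ →
      m * (y₂ - y₁) ≤ f y₁ - f y₂ ∧ f y₁ - f y₂ ≤ y₂ - y₁ := by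
    intro y₁ y₂ h
    have hs : 0 ≤ A y₁ - A y₂ := by linarith [hAanti y₁ y₂ h]
    have ht : 0 ≤ B y₂ - B y₁ := by linarith [hBmono y₁ y₂ h]
    have hsum := hkey y₁ y₂
    have hfe : f y₁ - f y₂ = θ * (A y₁ - A y₂) + (1 - θ) * (B y₂ - B y₁) := by
      simp only [hf]; ring
    have h1 : m ≤ θ := min_le_left _ _
    have h2 : m ≤ 1 - θ := min_le_right _ _
    constructor
    · rw [hfe]
      nlinarith
    · rw [hfe]
      nlinarith
  have hlip : LipschitzWith 1 f := by
    apply LipschitzWith.of_dist_le_mul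
    intro x y
    rw [Real.dist_eq, Real.dist_eq, NNReal.coe_one, one_mul]
    rcases le_total x y with h | h
    · have := hstep x y h
      rw [abs_le]
      constructor <;> [skip; skip] <;>
        cases' abs_cases (x - y) with hc hc <;> nlinarith [hm0, this.1, this.2]
    · have := hstep y x h
      rw [abs_le]
      constructor <;>
        cases' abs_cases (x - y) with hc hc <;> nlinarith [hm0, this.1, this.2]
  have hcont : Continuous f := hlip.continuous
  -- find a zero of f
  set c : ℝ := f 0 with hc
  set b : ℝ := (|c| + 1) / m with hb
  have hbpos : 0 < b := div_pos (by positivity) hm0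
  have hmb : m * b = |c| + 1 := by
    rw [hb]; field_simp
  have hfb : f b ≤ -1 := by
    have := (hstep 0 b hbpos.le).1
    have habs : -|c| ≤ c ∧ c ≤ |c| := abs_le.mp le_rfl
    nlinarith [habs.2]
  have hfa : 1 ≤ f (-b) := by
    have := (hstep (-b) 0 (by linarith)).1
    have habs : -|c| ≤ c := neg_abs_le c
    nlinarith
  have hab : (-b : ℝ) ≤ b := by linarith
  have hivt : (0 : ℝ) ∈ f '' Set.Icc (-b) b := by
    apply intermediate_value_Icc' hab hcont.continuousOn
    exact ⟨by linarith, by linarith⟩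
  obtain ⟨y, _, hy0⟩ := hivt
  have hiff : ∀ z : ℝ, IsExpectile θ Y z ↔ f z = 0 := by
    intro z
    unfold IsExpectile
    constructor
    · intro h; simp only [hf]; rw [hA, hB]; simp only; linarith [h]
    · intro h
      have : θ * A z - (1 - θ) * B z = 0 := h
      rw [hA, hB] at this
      simp only at this
      linarith
  refine ⟨y, (hiff y).mpr hy0, ?_⟩
  intro z hz
  have hz0 : f z = 0 := (hiff z).mp hz
  by_contra hne
  rcases lt_or_gt_of_ne hne with h | h
  · have := (hstep z y h.le).1
    nlinarith
  · have := (hstep y z h.le).1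
    nlinarith
end

section
/- For an integrable random vector X in ℝ^d and θ ∈ [1/2, 1), the expectile function e_θ(u) (the θ-expectile of uᵀX) is subadditive: e_θ(u₁ + u₂) ≤ e_θ(u₁) + e_θ(u₂) for all u₁, u₂ ∈ ℝ^d. -/
open MeasureTheory

lemma max_add_le_aux (a b : ℝ) : max (a + b) 0 ≤ max a 0 + max b 0 := by
  simpa using max_add_add_le_max_add_max (a := a) (b := b) (c := (0:ℝ)) (d := (0:ℝ))

/-- Key reformulation of the expectile condition. -/
lemma expectile_key {Ω : Type*} [MeasureSpace Ω]
    [IsProbabilityMeasure (volume : Measure Ω)]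
    {θ : ℝ} {Y : Ω → ℝ} {y : ℝ} (hY : Integrable Y) (h : IsExpectile θ Y y) :
    (2 * θ - 1) * (∫ ω, max (Y ω - y) 0) + (1 - θ) * ((∫ ω, Y ω) - y) = 0 := by
  have h1 : Integrable fun ω => max (Y ω - y) 0 := (hY.sub (integrable_const y)).pos_part
  have h2 : Integrable fun ω => max (y - Y ω) 0 := ((integrable_const y).sub hY).pos_part
  have h3 : (∫ ω, max (Y ω - y) 0) - (∫ ω, max (y - Y ω) 0) = (∫ ω, Y ω) - y := by
    rw [← integral_sub h1 h2]
    have e : (fun ω => max (Y ω - y) 0 - max (y - Y ω) 0) = fun ω => Y ω - y := by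
      funext ω
      have := max_zero_sub_max_neg_zero_eq_self (Y ω - y)
      simpa [neg_sub] using this
    rw [e, integral_sub hY (integrable_const y)]
    simp
  unfold IsExpectile at h
  linear_combination h + (θ - 1) * h3

/-- Subadditivity of the expectile function for `θ ∈ [1/2, 1)`:
`e_θ(u₁ + u₂) ≤ e_θ(u₁) + e_θ(u₂)`. -/
theorem expectile_subadditive {Ω : Type*} [MeasureSpace Ω]
    [IsProbabilityMeasure (volume : Measure Ω)] {d : ℕ}
    (X : Ω → Fin d → ℝ) (hint : ∀ i, Integrable fun ω => X ω i)
    (θ : ℝ) (hθ : θ ∈ Set.Ico (1 / 2 : ℝ) 1)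
    (u₁ u₂ : Fin d → ℝ) (y₁ y₂ y₁₂ : ℝ)
    (h₁ : IsExpectile θ (fun ω => ∑ i, u₁ i * X ω i) y₁)
    (h₂ : IsExpectile θ (fun ω => ∑ i, u₂ i * X ω i) y₂)
    (h₁₂ : IsExpectile θ (fun ω => ∑ i, (u₁ + u₂) i * X ω i) y₁₂) :
    y₁₂ ≤ y₁ + y₂ := by
  obtain ⟨hθ1, hθ2⟩ := hθ
  set Y₁ : Ω → ℝ := fun ω => ∑ i, u₁ i * X ω i with hY₁def
  set Y₂ : Ω → ℝ := fun ω => ∑ i, u₂ i * X ω i with hY₂def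
  set Y : Ω → ℝ := fun ω => ∑ i, (u₁ + u₂) i * X ω i with hYdef
  have hY1 : Integrable Y₁ := integrable_finset_sum _ (fun i _ => (hint i).const_mul _)
  have hY2 : Integrable Y₂ := integrable_finset_sum _ (fun i _ => (hint i).const_mul _)
  have hY : Integrable Y := integrable_finset_sum _ (fun i _ => (hint i).const_mul _)
  have hsum : ∀ ω, Y ω = Y₁ ω + Y₂ ω := by
    intro ω
    simp only [hYdef, hY₁def, hY₂def, Pi.add_apply, add_mul]
    exact Finset.sum_add_distrib
  have k1 := expectile_key hY1 h₁
  have k2 := expectile_key hY2 h₂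
  have k12 := expectile_key hY h₁₂
  have hM : (∫ ω, Y ω) = (∫ ω, Y₁ ω) + ∫ ω, Y₂ ω := by
    have : (fun ω => Y ω) = fun ω => Y₁ ω + Y₂ ω := funext hsum
    rw [this, integral_add hY1 hY2]
  -- integrability of positive parts
  have hp1 : Integrable fun ω => max (Y₁ ω - y₁) 0 := (hY1.sub (integrable_const y₁)).pos_part
  have hp2 : Integrable fun ω => max (Y₂ ω - y₂) 0 := (hY2.sub (integrable_const y₂)).pos_part
  have hps : Integrable fun ω => max (Y ω - (y₁ + y₂)) 0 :=
    (hY.sub (integrable_const _)).pos_part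
  have hp12 : Integrable fun ω => max (Y ω - y₁₂) 0 := (hY.sub (integrable_const _)).pos_part
  -- subadditivity of the positive-part integral
  have hineq : (∫ ω, max (Y ω - (y₁ + y₂)) 0)
      ≤ (∫ ω, max (Y₁ ω - y₁) 0) + ∫ ω, max (Y₂ ω - y₂) 0 := by
    rw [← integral_add hp1 hp2]
    refine integral_mono hps (hp1.add hp2) fun ω => ?_
    have e : Y ω - (y₁ + y₂) = (Y₁ ω - y₁) + (Y₂ ω - y₂) := by rw [hsum ω]; ring
    rw [e]
    exact max_add_le_aux _ _
  by_contra hcon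
  push_neg at hcon
  -- monotonicity of the positive part integral in y
  have hmono : (∫ ω, max (Y ω - y₁₂) 0) ≤ ∫ ω, max (Y ω - (y₁ + y₂)) 0 := by
    refine integral_mono hp12 hps fun ω => ?_
    exact max_le_max (by linarith) le_rfl
  rw [hM] at k12
  linarith [mul_le_mul_of_nonneg_left hineq (by linarith : (0:ℝ) ≤ 2 * θ - 1),
    mul_le_mul_of_nonneg_left hmono (by linarith : (0:ℝ) ≤ 2 * θ - 1),
    mul_lt_mul_of_pos_left hcon (by linarith : (0:ℝ) < 1 - θ)]
end

section
/- If the random vector X in ℝ^d is angularly symmetric about η, i.e. (X−η)/‖X−η‖ and −(X−η)/‖X−η‖ are equal in distribution (with X ≠ η almost surely), then for every i ∈ {1,…,d} the i-th coordinate η_i is a median of the i-th component X_i, i.e. P(X_i ≤ η_i) ≥ 1/2 and P(X_i ≥ η_i) ≥ 1/2. -/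
open MeasureTheory

/-- Euclidean-normalized direction of a vector in `ℝ^d`. -/
noncomputable def dir {d : ℕ} (v : Fin d → ℝ) : Fin d → ℝ :=
  (Real.sqrt (∑ i, (v i) ^ 2))⁻¹ • v

lemma dir_sign {d : ℕ} (v : Fin d → ℝ) (i : Fin d) :
    (dir v i ≤ 0 ↔ v i ≤ 0) ∧ (0 ≤ dir v i ↔ 0 ≤ v i) := by
  have hs : 0 ≤ Real.sqrt (∑ j, (v j) ^ 2) := Real.sqrt_nonneg _
  have hc : 0 ≤ (Real.sqrt (∑ j, (v j) ^ 2))⁻¹ := inv_nonneg.2 hs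
  rcases eq_or_ne (v i) 0 with h0 | h0
  · constructor <;> simp [dir, h0]
  · have hpos : 0 < ∑ j, (v j) ^ 2 := by
      have h1 : (v i) ^ 2 ≤ ∑ j, (v j) ^ 2 :=
        Finset.single_le_sum (fun j _ => sq_nonneg (v j)) (Finset.mem_univ i)
      have h2 : 0 < (v i) ^ 2 := by positivity
      linarith
    have hcpos : 0 < (Real.sqrt (∑ j, (v j) ^ 2))⁻¹ :=
      inv_pos.2 (Real.sqrt_pos.2 hpos)
    constructor
    · constructor
      · intro h
        have : dir v i = (Real.sqrt (∑ j, (v j) ^ 2))⁻¹ * v i := rfl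
        nlinarith [this ▸ h]
      · intro h
        have : dir v i = (Real.sqrt (∑ j, (v j) ^ 2))⁻¹ * v i := rfl
        rw [this]
        exact mul_nonpos_of_nonneg_of_nonpos hc h
    · constructor
      · intro h
        have : dir v i = (Real.sqrt (∑ j, (v j) ^ 2))⁻¹ * v i := rfl
        nlinarith [this ▸ h]
      · intro h
        have : dir v i = (Real.sqrt (∑ j, (v j) ^ 2))⁻¹ * v i := rfl
        rw [this]
        positivity

/-- If `X` is angularly symmetric about `η` (the normalized directions of `X − η`
and `−(X − η)` are equal in distribution, with `X ≠ η` a.s.), then each coordinate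
`η i` is a median of the `i`-th component of `X`. -/
theorem angular_symmetry_marginal_medians {Ω : Type*} [MeasureSpace Ω]
    [IsProbabilityMeasure (volume : Measure Ω)] {d : ℕ}
    (X : Ω → Fin d → ℝ) (hX : Measurable X) (η : Fin d → ℝ)
    (hne : ∀ᵐ ω, X ω ≠ η)
    (hsym : Measure.map (fun ω => dir (X ω - η)) volume =
            Measure.map (fun ω => -dir (X ω - η)) volume) :
    ∀ i : Fin d,
      (1 / 2 : ℝ) ≤ (volume {ω | X ω i ≤ η i}).toReal ∧
      (1 / 2 : ℝ) ≤ (volume {ω | η i ≤ X ω i}).toReal := by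
  intro i
  set Y : Ω → Fin d → ℝ := fun ω => dir (X ω - η) with hY
  have hmeasdir : Measurable fun v : Fin d → ℝ => dir v := by
    unfold dir
    have h1 : Measurable fun v : Fin d → ℝ => ∑ j, (v j) ^ 2 :=
      Finset.measurable_sum _ (fun j _ => (measurable_pi_apply j).pow_const 2)
    exact ((Real.continuous_sqrt.measurable.comp h1).inv).smul measurable_id
  have hYm : Measurable Y := hmeasdir.comp (hX.sub measurable_const)
  -- sets
  have hset_le : {ω | X ω i ≤ η i} = {ω | Y ω i ≤ 0} := by
    ext ω
    have := (dir_sign (X ω - η) i).1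
    simp only [Set.mem_setOf_eq, hY]
    rw [this]
    simp [sub_nonpos]
  have hset_ge : {ω | η i ≤ X ω i} = {ω | 0 ≤ Y ω i} := by
    ext ω
    have := (dir_sign (X ω - η) i).2
    simp only [Set.mem_setOf_eq, hY]
    rw [this]
    simp [sub_nonneg]
  -- symmetry gives equality of the two measures
  have hSmeas : MeasurableSet {v : Fin d → ℝ | v i ≤ 0} :=
    measurableSet_le (measurable_pi_apply i) measurable_const
  have heq : volume {ω | Y ω i ≤ 0} = volume {ω | 0 ≤ Y ω i} := by
    have h1 := congrArg (fun μ : Measure (Fin d → ℝ) => μ {v | v i ≤ 0}) hsym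
    rw [Measure.map_apply hYm hSmeas, Measure.map_apply (f := fun ω => -dir (X ω - η)) hYm.neg hSmeas] at h1
    convert h1 using 2
    ext ω
    simp [neg_nonpos, neg_le, Pi.neg_apply]
    ext ω
    simp [hY]
  -- union covers everything
  have hcover : (1 : ENNReal) ≤ volume {ω | Y ω i ≤ 0} + volume {ω | 0 ≤ Y ω i} := by
    have : (Set.univ : Set Ω) ⊆ {ω | Y ω i ≤ 0} ∪ {ω | 0 ≤ Y ω i} := by
      intro ω _
      rcases le_total (Y ω i) 0 with h | h
      · exact Or.inl h
      · exact Or.inr h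
    calc (1 : ENNReal) = volume (Set.univ : Set Ω) := (measure_univ).symm
      _ ≤ volume ({ω | Y ω i ≤ 0} ∪ {ω | 0 ≤ Y ω i}) := measure_mono this
      _ ≤ _ := measure_union_le _ _
  have hhalf : (1/2 : ENNReal) ≤ volume {ω | Y ω i ≤ 0} := by
    by_contra h
    push_neg at h
    have : volume {ω | Y ω i ≤ 0} + volume {ω | 0 ≤ Y ω i} < 1 := by
      rw [← heq]
      calc volume {ω | Y ω i ≤ 0} + volume {ω | Y ω i ≤ 0}
          < 1/2 + 1/2 := ENNReal.add_lt_add h h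
        _ = 1 := ENNReal.add_halves 1
    exact absurd hcover (not_le.2 this)
  have hhalf' : (1/2 : ENNReal) ≤ volume {ω | 0 ≤ Y ω i} := heq ▸ hhalf
  constructor
  · rw [hset_le]
    have := ENNReal.toReal_mono (measure_ne_top _ _) hhalf
    simpa using this
  · rw [hset_ge]
    have := ENNReal.toReal_mono (measure_ne_top _ _) hhalf'
    simpa using this
end

section
/- If X in ℝ^d is angularly symmetric about η and for every nonzero u the variable uᵀX has a continuous distribution, then the half-space depth of η with respect to X equals 1/2, i.e. HD_X(η) = inf_{‖u‖=1} P(uᵀX ≤ uᵀη) = 1/2, and η maximizes the half-space depth. -/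
open MeasureTheory

/-- Half-space depth. -/
noncomputable def HD {d : ℕ} (μ : Measure (Fin d → ℝ)) (x : Fin d → ℝ) : ℝ :=
  ⨅ u : {u : Fin d → ℝ // ∑ i, (u i) ^ 2 = 1},
    (μ {y | ∑ i, u.1 i * y i ≤ ∑ i, u.1 i * x i}).toReal

lemma meas_proj {d : ℕ} (u : Fin d → ℝ) :
    Measurable fun y : Fin d → ℝ => ∑ i, u i * y i :=
  Finset.measurable_sum _ fun i _ => (measurable_pi_apply i).const_mul _

lemma meas_dir {d : ℕ} (η : Fin d → ℝ) :
    Measurable fun y : Fin d → ℝ => dir (y - η) := by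
  unfold dir
  have h1 : Measurable fun y : Fin d → ℝ => y - η := measurable_id.sub measurable_const
  have h2 : Measurable fun y : Fin d → ℝ =>
      (Real.sqrt (∑ i, ((y - η) i) ^ 2))⁻¹ := by
    apply Measurable.inv
    apply Measurable.sqrt
    exact Finset.measurable_sum _ fun i _ => ((measurable_pi_apply i).sub measurable_const).pow_const 2
  exact h2.smul h1

lemma sum_sq_pos {d : ℕ} {v : Fin d → ℝ} (hv : v ≠ 0) : 0 < ∑ i, (v i) ^ 2 := by
  obtain ⟨i, hi⟩ := Function.ne_iff.mp hv
  have h0 : (0:ℝ) < (v i) ^ 2 := by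
    have : v i ≠ 0 := hi
    positivity
  exact lt_of_lt_of_le h0 (Finset.single_le_sum (fun j _ => sq_nonneg (v j)) (Finset.mem_univ i))

lemma dir_sum {d : ℕ} (u v : Fin d → ℝ) :
    ∑ i, u i * dir v i = (Real.sqrt (∑ i, (v i) ^ 2))⁻¹ * ∑ i, u i * v i := by
  unfold dir
  rw [Finset.mul_sum]
  exact Finset.sum_congr rfl fun i _ => by simp [smul_eq_mul]; ring

lemma sign_lt {d : ℕ} (u η : Fin d → ℝ) :
    {y : Fin d → ℝ | ∑ i, u i * dir (y - η) i < 0}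
      = {y | ∑ i, u i * (y i - η i) < 0} := by
  ext y
  simp only [Set.mem_setOf_eq, dir_sum, Pi.sub_apply]
  rcases eq_or_ne y η with rfl | hy
  · simp
  · have hv : y - η ≠ 0 := sub_ne_zero.mpr hy
    have hs : 0 < Real.sqrt (∑ i, (y i - η i) ^ 2) := by
      apply Real.sqrt_pos.mpr
      have := sum_sq_pos hv
      simpa using this
    have hc : 0 < (Real.sqrt (∑ i, (y i - η i) ^ 2))⁻¹ := inv_pos.mpr hs
    constructor <;> intro h <;> nlinarith

lemma sign_gt {d : ℕ} (u η : Fin d → ℝ) :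
    {y : Fin d → ℝ | ∑ i, u i * (-dir (y - η)) i < 0}
      = {y | 0 < ∑ i, u i * (y i - η i)} := by
  ext y
  simp only [Set.mem_setOf_eq, Pi.neg_apply, mul_neg, Finset.sum_neg_distrib,
    neg_neg, dir_sum, Pi.sub_apply, neg_lt_zero]
  rcases eq_or_ne y η with rfl | hy
  · simp
  · have hv : y - η ≠ 0 := sub_ne_zero.mpr hy
    have hs : 0 < Real.sqrt (∑ i, (y i - η i) ^ 2) := by
      apply Real.sqrt_pos.mpr
      have := sum_sq_pos hv
      simpa using this
    have hc : 0 < (Real.sqrt (∑ i, (y i - η i) ^ 2))⁻¹ := inv_pos.mpr hs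
    constructor <;> intro h <;> nlinarith

/-- If `X` (with law `μ`) is angularly symmetric about `η` and every non-trivial
projection `uᵀX` is atomless, then the half-space depth of `η` is `1/2`, and `η`
maximizes the half-space depth. -/
theorem angular_symmetry_depth_half {d : ℕ} (μ : Measure (Fin d → ℝ))
    [IsProbabilityMeasure μ] (η : Fin d → ℝ)
    (hcont : ∀ u : Fin d → ℝ, u ≠ 0 → ∀ t : ℝ, μ {y | ∑ i, u i * y i = t} = 0)
    (hne : μ {η} = 0)
    (hsym : μ.map (fun y => dir (y - η)) = μ.map (fun y => -dir (y - η))) :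
    HD μ η = 1 / 2 ∧ ∀ x : Fin d → ℝ, HD μ x ≤ HD μ η := by
  -- d is positive
  have hd : 0 < d := by
    rcases Nat.eq_zero_or_pos d with h | h
    · exfalso
      subst h
      have h1 : ({η} : Set (Fin 0 → ℝ)) = Set.univ := by
        ext y
        simp [Subsingleton.elim y η]
      rw [h1, measure_univ] at hne
      exact one_ne_zero hne
    · exact h
  -- the index type is nonempty
  have hNE : Nonempty {u : Fin d → ℝ // ∑ i, (u i) ^ 2 = 1} := by
    refine ⟨⟨fun i => if i = ⟨0, hd⟩ then 1 else 0, ?_⟩⟩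
    have : ∀ i : Fin d, (if i = ⟨0, hd⟩ then (1:ℝ) else 0) ^ 2
        = if i = ⟨0, hd⟩ then (1:ℝ) else 0 := by
      intro i; split <;> norm_num
    simp [this]
  -- halfspaces through t split the mass
  have sum_one : ∀ u : Fin d → ℝ, u ≠ 0 → ∀ t : ℝ,
      μ {y | ∑ i, u i * y i ≤ t} + μ {y | t ≤ ∑ i, u i * y i} = 1 := by
    intro u hu0 t
    have hA : MeasurableSet {y : Fin d → ℝ | ∑ i, u i * y i ≤ t} :=
      measurableSet_le (meas_proj u) measurable_const
    have hB : MeasurableSet {y : Fin d → ℝ | t ≤ ∑ i, u i * y i} :=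
      measurableSet_le measurable_const (meas_proj u)
    have hU : {y : Fin d → ℝ | ∑ i, u i * y i ≤ t} ∪ {y | t ≤ ∑ i, u i * y i}
        = Set.univ := by
      ext y; simpa using le_total (∑ i, u i * y i) t
    have hI : {y : Fin d → ℝ | ∑ i, u i * y i ≤ t} ∩ {y | t ≤ ∑ i, u i * y i}
        = {y | ∑ i, u i * y i = t} := by
      ext y
      simp only [Set.mem_inter_iff, Set.mem_setOf_eq]
      constructor
      · rintro ⟨h1, h2⟩; exact le_antisymm h1 h2
      · rintro h; exact ⟨le_of_eq h, ge_of_eq h⟩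
    have := measure_union_add_inter (μ := μ)
      {y : Fin d → ℝ | ∑ i, u i * y i ≤ t} hB
    rw [hU, hI, measure_univ, hcont u hu0 t, add_zero] at this
    exact this.symm
  -- every unit-direction halfspace through η has mass 1/2
  have half : ∀ u : Fin d → ℝ, (∑ i, (u i) ^ 2 = 1) →
      (μ {y | ∑ i, u i * y i ≤ ∑ i, u i * η i}).toReal = 1 / 2 := by
    intro u hu
    have hu0 : u ≠ 0 := by
      intro h; rw [h] at hu; simp at hu
    set t := ∑ i, u i * η i with ht
    have key : ∀ y : Fin d → ℝ, ∑ i, u i * (y i - η i) = (∑ i, u i * y i) - t := by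
      intro y; simp [mul_sub, Finset.sum_sub_distrib, ht]
    -- symmetry: mass of open lower halfspace = mass of open upper halfspace
    have hsymm : μ {y | ∑ i, u i * y i < t} = μ {y | t < ∑ i, u i * y i} := by
      have hC : MeasurableSet {z : Fin d → ℝ | ∑ i, u i * z i < 0} :=
        measurableSet_lt (meas_proj u) measurable_const
      have h1 := congrArg (fun ν : Measure (Fin d → ℝ) =>
        ν {z : Fin d → ℝ | ∑ i, u i * z i < 0}) hsym
      rw [Measure.map_apply (meas_dir η) hC, Measure.map_apply (f := fun y => -dir (y - η)) (meas_dir η).neg hC] at h1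
      have e1 : (fun y : Fin d → ℝ => dir (y - η)) ⁻¹' {z | ∑ i, u i * z i < 0}
          = {y | ∑ i, u i * y i < t} := by
        rw [show (fun y : Fin d → ℝ => dir (y - η)) ⁻¹' {z | ∑ i, u i * z i < 0}
            = {y : Fin d → ℝ | ∑ i, u i * dir (y - η) i < 0} from rfl, sign_lt]
        ext y
        simp only [Set.mem_setOf_eq, key, sub_neg]
      have e2 : (fun y : Fin d → ℝ => -dir (y - η)) ⁻¹' {z | ∑ i, u i * z i < 0}
          = {y | t < ∑ i, u i * y i} := by
        rw [show (fun y : Fin d → ℝ => -dir (y - η)) ⁻¹' {z | ∑ i, u i * z i < 0}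
            = {y : Fin d → ℝ | ∑ i, u i * (-dir (y - η)) i < 0} from rfl, sign_gt]
        ext y
        simp only [Set.mem_setOf_eq, key, sub_pos]
      rw [e1, e2] at h1
      exact h1
    have hE : μ {y : Fin d → ℝ | ∑ i, u i * y i = t} = 0 := hcont u hu0 t
    have hAlt : μ {y : Fin d → ℝ | ∑ i, u i * y i ≤ t}
        = μ {y | ∑ i, u i * y i < t} := by
      have : {y : Fin d → ℝ | ∑ i, u i * y i ≤ t}
          = {y | ∑ i, u i * y i < t} ∪ {y | ∑ i, u i * y i = t} := by
        ext y; simpa using le_iff_lt_or_eq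
      rw [this]
      exact le_antisymm ((measure_union_le _ _).trans (by rw [hE, add_zero]))
        (measure_mono Set.subset_union_left)
    have hBgt : μ {y : Fin d → ℝ | t ≤ ∑ i, u i * y i}
        = μ {y | t < ∑ i, u i * y i} := by
      have : {y : Fin d → ℝ | t ≤ ∑ i, u i * y i}
          = {y | t < ∑ i, u i * y i} ∪ {y | ∑ i, u i * y i = t} := by
        ext y
        simp only [Set.mem_setOf_eq, Set.mem_union]
        rw [le_iff_lt_or_eq]
        exact or_congr Iff.rfl eq_comm
      rw [this]
      exact le_antisymm ((measure_union_le _ _).trans (by rw [hE, add_zero]))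
        (measure_mono Set.subset_union_left)
    have hs1 := sum_one u hu0 t
    rw [hAlt, hBgt, ← hsymm] at hs1
    have hfin : μ {y : Fin d → ℝ | ∑ i, u i * y i < t} ≠ ⊤ := measure_ne_top μ _
    have := congrArg ENNReal.toReal hs1
    rw [ENNReal.toReal_add hfin hfin, ENNReal.toReal_one] at this
    rw [hAlt]
    linarith
  have hHDη : HD μ η = 1 / 2 := by
    have heq : HD μ η = ⨅ _u : {u : Fin d → ℝ // ∑ i, (u i) ^ 2 = 1}, (1/2 : ℝ) := by
      unfold HD
      congr 1
      funext u
      exact half u.1 u.2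
    rw [heq, ciInf_const]
  refine ⟨hHDη, ?_⟩
  intro x
  rw [hHDη]
  obtain ⟨u₀⟩ := hNE
  have hu0 : u₀.1 ≠ 0 := by
    intro h
    have := u₀.2
    rw [h] at this; simp at this
  have hbdd : BddBelow (Set.range fun u : {u : Fin d → ℝ // ∑ i, (u i) ^ 2 = 1} =>
      (μ {y | ∑ i, u.1 i * y i ≤ ∑ i, u.1 i * x i}).toReal) := by
    refine ⟨0, ?_⟩
    rintro r ⟨u, rfl⟩
    exact ENNReal.toReal_nonneg
  set t := ∑ i, u₀.1 i * x i with ht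
  have hs1 := sum_one u₀.1 hu0 t
  have hfa : μ {y : Fin d → ℝ | ∑ i, u₀.1 i * y i ≤ t} ≠ ⊤ := measure_ne_top μ _
  have hfb : μ {y : Fin d → ℝ | t ≤ ∑ i, u₀.1 i * y i} ≠ ⊤ := measure_ne_top μ _
  have hsum := congrArg ENNReal.toReal hs1
  rw [ENNReal.toReal_add hfa hfb, ENNReal.toReal_one] at hsum
  rcases le_or_gt (μ {y : Fin d → ℝ | ∑ i, u₀.1 i * y i ≤ t}).toReal (1/2) with h | h
  · calc HD μ x ≤ (μ {y | ∑ i, u₀.1 i * y i ≤ ∑ i, u₀.1 i * x i}).toReal :=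
      ciInf_le hbdd u₀
    _ ≤ 1 / 2 := by rw [← ht]; exact h
  · have hb : (μ {y : Fin d → ℝ | t ≤ ∑ i, u₀.1 i * y i}).toReal ≤ 1 / 2 := by
      linarith
    have hu' : ∑ i, ((-u₀.1) i) ^ 2 = 1 := by
      have := u₀.2
      simpa [neg_sq] using this
    have hset : {y : Fin d → ℝ | ∑ i, (-u₀.1) i * y i ≤ ∑ i, (-u₀.1) i * x i}
        = {y | t ≤ ∑ i, u₀.1 i * y i} := by
      ext y
      simp only [Set.mem_setOf_eq, Pi.neg_apply, neg_mul, Finset.sum_neg_distrib,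
        neg_le_neg_iff, ht]
    calc HD μ x ≤ (μ {y | ∑ i, (-u₀.1) i * y i ≤ ∑ i, (-u₀.1) i * x i}).toReal :=
      ciInf_le hbdd ⟨-u₀.1, hu'⟩
    _ ≤ 1 / 2 := by rw [hset]; exact hb
end
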